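/- Let K and L be Hopf algebras over a field k of characteristic 0, let ζ : K → L be a bialgebra homomorphism, and let ρ : L → K ⊗ L be a k-algebra homomorphism which is a coassociative counital left coaction. Suppose the crossed comodule condition (iii) holds: (ζ ⊗ id_L) ∘ ρ = coad_L, where coad_L := (μ_L ⊗ id_L) ∘ (id_L ⊗ τ_{L,L}) ∘ (Δ_L ⊗ S_L) ∘ Δ_L. Then for all characters φ, ψ of L one has (φ ∘ ζ) ⋆_ρ ψ = φ ⋆ ψ ⋆ (φ ∘ S_L) in χ(L), where η ⋆_ρ ψ := μ_k ∘ (η ⊗ ψ) ∘ ρ for a character η of K and ⋆ is convolution in χ(L). That is, writing μ := (− ∘ ζ) : χ(L) → χ(K), the Peiffer identity (b) μ(φ) ⋆_ρ ψ = φ ⋆ ψ ⋆ φ⁻¹ holds. -/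
import Mathlib


open TensorProduct

/-- Convolution `φ ⋆ ψ := μ_k ∘ (φ ⊗ ψ) ∘ Δ` of linear functionals on a bialgebra. -/
noncomputable def hopfConv {k L : Type*} [CommRing k] [Ring L] [Bialgebra k L]
    (φ ψ : L →ₗ[k] k) : L →ₗ[k] k :=
  LinearMap.mul' k k ∘ₗ TensorProduct.map φ ψ ∘ₗ Coalgebra.comul

/-- The pairing `η ⋆_ρ φ := μ_k ∘ (η ⊗ φ) ∘ ρ` along a coaction `ρ : L → K ⊗ L`. -/
noncomputable def coactConv {k K L : Type*} [CommRing k] [Ring K] [Bialgebra k K]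
    [Ring L] [Bialgebra k L] (ρ : L →ₐ[k] K ⊗[k] L)
    (η : K →ₗ[k] k) (φ : L →ₗ[k] k) : L →ₗ[k] k :=
  LinearMap.mul' k k ∘ₗ TensorProduct.map η φ ∘ₗ ρ.toLinearMap

/-- The adjoint coaction `coad_L = (μ_L ⊗ id) ∘ (id ⊗ τ) ∘ (Δ_L ⊗ S_L) ∘ Δ_L`. -/
noncomputable def hopfCoad {k L : Type*} [CommRing k] [Ring L] [HopfAlgebra k L] :
    L →ₗ[k] L ⊗[k] L :=
  TensorProduct.map (LinearMap.mul' k L) LinearMap.id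
    ∘ₗ (TensorProduct.assoc k L L L).symm.toLinearMap
    ∘ₗ TensorProduct.map LinearMap.id (TensorProduct.comm k L L).toLinearMap
    ∘ₗ (TensorProduct.assoc k L L L).toLinearMap
    ∘ₗ TensorProduct.map Coalgebra.comul (HopfAlgebra.antipode (R := k))
    ∘ₗ Coalgebra.comul

set_option synthInstance.maxHeartbeats 1000000 in
/-- Condition (iii) of a crossed comodule of Hopf algebras
(`(ζ ⊗ id_L) ∘ ρ = coad_L`) yields, on characters, the Peiffer identity (b):
`(φ ∘ ζ) ⋆_ρ ψ = φ ⋆ ψ ⋆ (φ ∘ S_L) = μ(φ) ⋆_ρ ψ = φ ⋆ ψ ⋆ φ⁻¹` in `χ(L)`. -/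
theorem crossedComodule_condition_iii_on_characters
    (k : Type*) [Field k] [CharZero k]
    (K : Type*) [Ring K] [HopfAlgebra k K]
    (L : Type*) [Ring L] [HopfAlgebra k L]
    (ζ : K →ₐc[k] L)
    (ρ : L →ₐ[k] K ⊗[k] L)
    -- coassociativity: (id_K ⊗ ρ) ∘ ρ = (Δ_K ⊗ id_L) ∘ ρ
    (h_coassoc : ∀ x : L,
      (TensorProduct.map LinearMap.id ρ.toLinearMap) (ρ x)
        = (TensorProduct.assoc k K K L)
            ((TensorProduct.map (Coalgebra.comul (R := k)) LinearMap.id) (ρ x)))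
    -- counitality: (ε_K ⊗ id_L) ∘ ρ = id_L
    (h_counit : ∀ x : L,
      (TensorProduct.lid k L)
        ((TensorProduct.map (Coalgebra.counit (R := k)) LinearMap.id) (ρ x)) = x)
    -- condition (iii): (ζ ⊗ id_L) ∘ ρ = coad_L
    (h_iii : ∀ x : L,
      (TensorProduct.map (ζ : K →ₗ[k] L) LinearMap.id) (ρ x) = hopfCoad x) :
    ∀ φ ψ : L →ₐ[k] k,
      coactConv ρ (φ.toLinearMap ∘ₗ (ζ : K →ₗ[k] L)) ψ.toLinearMap
        = hopfConv
            (hopfConv φ.toLinearMap ψ.toLinearMap)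
            (φ.toLinearMap ∘ₗ HopfAlgebra.antipode (R := k)) := by
  intro φ ψ
  ext x
  have key : (TensorProduct.map φ.toLinearMap ψ.toLinearMap)
      ((TensorProduct.map (ζ : K →ₗ[k] L) LinearMap.id) (ρ x))
      = (TensorProduct.map φ.toLinearMap ψ.toLinearMap) (hopfCoad x) := by
    rw [h_iii]
  simp only [coactConv, hopfConv, hopfCoad, LinearMap.coe_comp, Function.comp_apply]
  have comp_eq : TensorProduct.map φ.toLinearMap ψ.toLinearMap
        ∘ₗ TensorProduct.map (ζ : K →ₗ[k] L) LinearMap.id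
      = TensorProduct.map (φ.toLinearMap ∘ₗ (ζ : K →ₗ[k] L)) ψ.toLinearMap := by
    rw [← TensorProduct.map_comp, LinearMap.comp_id]
  have lhs_eq : (TensorProduct.map (φ.toLinearMap ∘ₗ (ζ : K →ₗ[k] L)) ψ.toLinearMap)
        (ρ.toLinearMap x)
      = (TensorProduct.map φ.toLinearMap ψ.toLinearMap)
        ((TensorProduct.map (ζ : K →ₗ[k] L) LinearMap.id) (ρ x)) := by
    rw [← comp_eq]; rfl
  rw [lhs_eq, key]
  -- now a pure Hopf algebra identity applied to comul x
  set S : L →ₗ[k] L := HopfAlgebra.antipode (R := k)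
  -- reduce to a statement about t = comul x
  have main : ∀ t : L ⊗[k] L,
      LinearMap.mul' k k ((TensorProduct.map φ.toLinearMap ψ.toLinearMap)
        ((TensorProduct.map (LinearMap.mul' k L) LinearMap.id)
          ((TensorProduct.assoc k L L L).symm
            ((TensorProduct.map LinearMap.id (TensorProduct.comm k L L).toLinearMap)
              ((TensorProduct.assoc k L L L)
                ((TensorProduct.map (Coalgebra.comul (R := k)) S) t))))))
      = LinearMap.mul' k k ((TensorProduct.map
          (LinearMap.mul' k k ∘ₗ TensorProduct.map φ.toLinearMap ψ.toLinearMap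
            ∘ₗ Coalgebra.comul) (φ.toLinearMap ∘ₗ S)) t) := by
    intro t
    induction t using TensorProduct.induction_on with
    | zero => simp only [_root_.map_zero, LinearEquiv.map_zero]
    | add a b ha hb => simp only [map_add, LinearEquiv.map_add, ha, hb]
    | tmul a b =>
      simp only [TensorProduct.map_tmul, LinearMap.id_coe, id_eq]
      have inner : ∀ s : L ⊗[k] L,
          LinearMap.mul' k k ((TensorProduct.map φ.toLinearMap ψ.toLinearMap)
            ((TensorProduct.map (LinearMap.mul' k L) LinearMap.id)
              ((TensorProduct.assoc k L L L).symm
                ((TensorProduct.map LinearMap.id (TensorProduct.comm k L L).toLinearMap)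
                  ((TensorProduct.assoc k L L L) (s ⊗ₜ[k] S b))))))
          = (LinearMap.mul' k k ((TensorProduct.map φ.toLinearMap ψ.toLinearMap) s))
              * φ (S b) := by
        intro s
        induction s using TensorProduct.induction_on with
        | zero =>
          simp only [TensorProduct.zero_tmul, LinearEquiv.map_zero, _root_.map_zero, zero_mul]
        | add c d hc hd =>
          simp only [TensorProduct.add_tmul, map_add, hc, hd, add_mul]
        | tmul u v =>
          simp only [TensorProduct.assoc_tmul, TensorProduct.map_tmul,
            LinearMap.id_coe, id_eq, LinearEquiv.coe_coe, TensorProduct.comm_tmul,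
            TensorProduct.assoc_symm_tmul, LinearMap.mul'_apply,
            AlgHom.toLinearMap_apply, map_mul]
          ring
      rw [inner (Coalgebra.comul a)]
      simp only [LinearMap.coe_comp, Function.comp_apply, LinearMap.mul'_apply,
        AlgHom.toLinearMap_apply]
  exact main (Coalgebra.comul x)
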